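/- Let C ⊆ E be a convex set, let {F_α}_{α∈I} be a nonempty family of faces of C, choose x_α ∈ ri(F_α) for each α ∈ I, and let z ∈ ri(conv{x_α : α ∈ I}). Then F(C,z) is the supremum of the family in the face lattice: F_α ⊆ F(C,z) for every α ∈ I, and every face of C that contains all F_α contains F(C,z). -/

import Mathlib

open scoped Pointwise RealInnerProductSpace

variable {E : Type*} [NormedAddCommGroup E] [InnerProductSpace ℝ E] [FiniteDimensional ℝ E]

/-- `F` is a face of the convex set `C`: a convex subset of `C` such that whenever an open
segment between two points of `C` meets `F`, both endpoints belong to `F`. -/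
def IsFace (C F : Set E) : Prop :=
  Convex ℝ F ∧ F ⊆ C ∧
    ∀ x ∈ C, ∀ y ∈ C, (openSegment ℝ x y ∩ F).Nonempty → x ∈ F ∧ y ∈ F

/-- The exposed face `F⊥(C,u)` of `C` by the vector `u`: the points of `C` where `⟨u,·⟩`
attains its supremum over `C`. -/
def expFace (C : Set E) (u : E) : Set E :=
  {x ∈ C | ∀ y ∈ C, ⟪u, y⟫ ≤ ⟪u, x⟫}

/-- `F` is an exposed face of `C`: either `∅`, or `C`, or `F⊥(C,u)` for some nonzero `u`. -/
def IsExpFace (C F : Set E) : Prop :=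
  F = ∅ ∨ F = C ∨ ∃ u : E, u ≠ 0 ∧ F = expFace C u

/-- The normal cone `N(C,x)` of `C` at the point `x`. -/
def normalCone (C : Set E) (x : E) : Set E :=
  {u | ∀ y ∈ C, ⟪u, y - x⟫ ≤ 0}

/-- The normal cone `N(C,F)` of `C` at a subset `F`; for a nonempty convex `F ⊆ C` it agrees
with `normalCone C x` for any `x` in the relative interior of `F` (all these coincide), and
for `F = ∅` it is all of `E`. -/
def normalConeOf (C F : Set E) : Set E :=
  ⋂ x ∈ intrinsicInterior ℝ F, normalCone C x

/-- `N` is a normal cone of `C`: the normal cone of some face of `C`. -/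
def IsNormalCone (C N : Set E) : Prop :=
  ∃ F, IsFace C F ∧ N = normalConeOf C F

/-- `T` is a touching cone of `C`: a nonempty face of a normal cone of `C`. -/
def IsTouchingCone (C T : Set E) : Prop :=
  T.Nonempty ∧ ∃ N, IsNormalCone C N ∧ IsFace N T

/-- The positive hull of a set: all finite nonnegative combinations (`posHull ∅ = {0}`). -/
def posHull (S : Set E) : Set E :=
  {x | ∃ (k : ℕ) (c : Fin k → ℝ) (s : Fin k → E),
    (∀ i, 0 ≤ c i) ∧ (∀ i, s i ∈ S) ∧ x = ∑ i, c i • s i}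

/-- A vector `u` is sharp normal for `C` if every `x ∈ ri(F⊥(C,u))` satisfies
`u ∈ ri(N(C,x))`. -/
def SharpNormal (C : Set E) (u : E) : Prop :=
  ∀ x ∈ intrinsicInterior ℝ (expFace C u), u ∈ intrinsicInterior ℝ (normalCone C x)

/-- A point `x` is sharp exposed in `C` if every nonzero `u ∈ ri(N(C,x))` satisfies
`x ∈ ri(F⊥(C,u))`. -/
def SharpExposed (C : Set E) (x : E) : Prop :=
  ∀ u ∈ intrinsicInterior ℝ (normalCone C x), u ≠ 0 → x ∈ intrinsicInterior ℝ (expFace C u)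

/-- The smallest exposed face of `C` containing `F`: the intersection of all exposed faces
of `C` containing `F`. -/
def supExp (C F : Set E) : Set E :=
  ⋂₀ {G | IsExpFace C G ∧ F ⊆ G}

/-- The polar body of `K`. -/
def polarBody (K : Set E) : Set E := {u | ∀ y ∈ K, ⟪u, y⟫ ≤ 1}

open Set in
/-- Metric characterization of membership in the intrinsic interior. -/
lemma mem_ii_iff {D : Set E} {z : E} :
    z ∈ intrinsicInterior ℝ D ↔
      z ∈ affineSpan ℝ D ∧ ∃ ε > 0, ∀ y ∈ affineSpan ℝ D, dist y z < ε → y ∈ D := by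
  constructor
  · rintro ⟨z', hz', rfl⟩
    refine ⟨z'.2, ?_⟩
    rw [mem_interior_iff_mem_nhds, Metric.mem_nhds_iff] at hz'
    obtain ⟨ε, hε, hball⟩ := hz'
    refine ⟨ε, hε, fun y hy hdy => ?_⟩
    have : (⟨y, hy⟩ : affineSpan ℝ D) ∈ Metric.ball z' ε := by
      simpa [Metric.mem_ball, Subtype.dist_eq] using hdy
    exact hball this
  · rintro ⟨hz, ε, hε, h⟩
    refine ⟨⟨z, hz⟩, ?_, rfl⟩
    rw [mem_interior_iff_mem_nhds, Metric.mem_nhds_iff]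
    refine ⟨ε, hε, fun y hy => ?_⟩
    exact h y y.2 (by simpa [Metric.mem_ball, Subtype.dist_eq] using hy)

/-- From a point of the intrinsic interior, any segment from `p ∈ D` can be extended beyond. -/
lemma extend_of_mem_ii {D : Set E} {z : E} (p : E) (hz : z ∈ intrinsicInterior ℝ D)
    (hp : p ∈ D) : ∃ t : ℝ, 0 < t ∧ z + t • (z - p) ∈ D := by
  rw [mem_ii_iff] at hz
  obtain ⟨hzs, ε, hε, h⟩ := hz
  by_cases hpz : p = z
  · refine ⟨1, one_pos, ?_⟩
    simp only [hpz, sub_self, smul_zero, add_zero]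
    exact h z hzs (by simp [hε])
  have hnorm : 0 < ‖z - p‖ := by
    rw [norm_pos_iff, sub_ne_zero]; exact fun hh => hpz hh.symm
  refine ⟨ε / (2 * ‖z - p‖), by positivity, ?_⟩
  set t := ε / (2 * ‖z - p‖) with ht
  have hmem : z + t • (z - p) ∈ affineSpan ℝ D := by
    have := AffineSubspace.smul_vsub_vadd_mem (affineSpan ℝ D) t hzs
      (subset_affineSpan ℝ D hp) hzs
    simpa [vsub_eq_sub, vadd_eq_add, add_comm] using this
  refine h _ hmem ?_
  have : dist (z + t • (z - p)) z = t * ‖z - p‖ := by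
    rw [dist_eq_norm, add_sub_cancel_left, norm_smul, Real.norm_eq_abs,
      abs_of_pos (by positivity : (0:ℝ) < t)]
  rw [this, ht]
  calc ε / (2 * ‖z - p‖) * ‖z - p‖ = ε / 2 := by field_simp
    _ < ε := by linarith

/-- The open segment from an intrinsic-interior point to a point of a convex set stays in
the intrinsic interior. -/
lemma mem_ii_of_openSegment {D : Set E} (hD : Convex ℝ D) {g w z : E}
    (hg : g ∈ intrinsicInterior ℝ D) (hw : w ∈ D) (hzseg : z ∈ openSegment ℝ g w) :
    z ∈ intrinsicInterior ℝ D := by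
  obtain ⟨a, b, ha, hb, hab, hz⟩ := hzseg
  rw [mem_ii_iff] at hg ⊢
  obtain ⟨hgs, ε, hε, h⟩ := hg
  have hws : w ∈ affineSpan ℝ D := subset_affineSpan ℝ D hw
  have hzs : z ∈ affineSpan ℝ D := by
    have := AffineSubspace.smul_vsub_vadd_mem (affineSpan ℝ D) a hgs hws hws
    have e : a • (g - w) + w = z := by rw [← hz]; have : b = 1 - a := by linarith
                                       rw [this]; module
    simpa [vsub_eq_sub, vadd_eq_add, e] using this
  refine ⟨hzs, a * ε, by positivity, fun y hy hdy => ?_⟩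
  set g' := g + (1 / a) • (y - z) with hg'
  have hg's : g' ∈ affineSpan ℝ D := by
    have := AffineSubspace.smul_vsub_vadd_mem (affineSpan ℝ D) (1 / a) hy hzs hgs
    simpa [vsub_eq_sub, vadd_eq_add, hg', add_comm] using this
  have hdist : dist g' g < ε := by
    have : dist g' g = (1 / a) * dist y z := by
      rw [hg', dist_eq_norm, dist_eq_norm, add_sub_cancel_left, norm_smul, Real.norm_eq_abs,
        abs_of_pos (by positivity : (0:ℝ) < 1 / a)]
    rw [this]
    rw [div_mul_eq_mul_div, one_mul, div_lt_iff₀ ha, mul_comm]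
    linarith
  have hg'D : g' ∈ D := h g' hg's hdist
  have ha' : a ≠ 0 := ha.ne'
  have : a • g' + b • w = y := by
    have hb' : b = 1 - a := by linarith
    rw [hg', ← hz, hb']
    match_scalars <;> field_simp <;> ring
  rw [← this]
  exact hD hg'D hw ha.le hb.le hab

/-- Key step: if `z` extends past `m` inside `C` with `m` a convex combination of `p, q ∈ C`,
then `z` extends past `p` inside `C`. -/
lemma face_step {C : Set E} (hC : Convex ℝ C) {z p q m : E} (hq : q ∈ C)
    {θ₁ θ₂ t : ℝ} (hθ₁ : 0 < θ₁) (hθ₂ : 0 ≤ θ₂) (hsum : θ₁ + θ₂ = 1)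
    (ht : 0 < t) (hm : θ₁ • p + θ₂ • q = m) (hr : z + t • (z - m) ∈ C) :
    ∃ s : ℝ, 0 < s ∧ z + s • (z - p) ∈ C := by
  set d : ℝ := 1 + t * θ₂ with hd
  have hd0 : 0 < d := by positivity
  have hd' : d ≠ 0 := hd0.ne'
  refine ⟨t * θ₁ / d, by positivity, ?_⟩
  have key : z + (t * θ₁ / d) • (z - p)
      = (t * θ₂ / d) • q + (1 / d) • (z + t • (z - m)) := by
    rw [← hm, hd]
    match_scalars <;> field_simp <;> nlinarith [hsum]
  rw [key]
  refine hC hq hr (by positivity) (by positivity) ?_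
  field_simp
  rw [hd]; ring


/-- Given a nonempty family of faces `F α` of a convex set `C`, points
`x α ∈ ri(F α)` and `z ∈ ri(conv {x α})`, the face `F(C,z)` of `C` with `z` in its relative
interior exists and is the supremum of the family in the face lattice. -/
theorem stmt_2 (C : Set E) (hC : Convex ℝ C) {ι : Type*} [Nonempty ι]
    (F : ι → Set E) (hF : ∀ α, IsFace C (F α)) (x : ι → E)
    (hx : ∀ α, x α ∈ intrinsicInterior ℝ (F α))
    (z : E) (hz : z ∈ intrinsicInterior ℝ (convexHull ℝ (Set.range x))) :
    ∃ G, IsFace C G ∧ z ∈ intrinsicInterior ℝ G ∧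
      (∀ α, F α ⊆ G) ∧ ∀ G', IsFace C G' → (∀ α, F α ⊆ G') → G ⊆ G' := by
  classical
  set S : Set E := convexHull ℝ (Set.range x) with hS
  have hxC : ∀ α, x α ∈ C := fun α => (hF α).2.1 (intrinsicInterior_subset (hx α))
  have hSC : S ⊆ C := convexHull_min (by rintro _ ⟨α, rfl⟩; exact hxC α) hC
  have hzS : z ∈ S := intrinsicInterior_subset hz
  have hzC : z ∈ C := hSC hzS
  set G : Set E := {y | y ∈ C ∧ ∃ t : ℝ, 0 < t ∧ z + t • (z - y) ∈ C} with hG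
  have hzG : z ∈ G := ⟨hzC, 1, one_pos, by simpa using hzC⟩
  -- G is convex
  have hGconv : Convex ℝ G := by
    rintro y₁ ⟨hy₁C, t₁, ht₁, hp₁⟩ y₂ ⟨hy₂C, t₂, ht₂, hp₂⟩ a b ha hb hab
    refine ⟨hC hy₁C hy₂C ha hb hab, ?_⟩
    rcases ha.eq_or_lt with rfl | ha
    · have : b = 1 := by linarith
      subst this
      simpa using ⟨t₂, ht₂, by simpa using hp₂⟩
    rcases hb.eq_or_lt with rfl | hb
    · have : a = 1 := by linarith
      subst this
      simpa using ⟨t₁, ht₁, by simpa using hp₁⟩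
    have hden : 0 < a / t₁ + b / t₂ := by positivity
    set t : ℝ := (a / t₁ + b / t₂)⁻¹ with htdef
    have ht : 0 < t := by positivity
    refine ⟨t, ht, ?_⟩
    have hl₁ : (0:ℝ) ≤ t * a / t₁ := by positivity
    have hl₂ : (0:ℝ) ≤ t * b / t₂ := by positivity
    have hlsum : t * a / t₁ + t * b / t₂ = 1 := by
      rw [htdef]; field_simp
    have key : z + t • (z - (a • y₁ + b • y₂))
        = (t * a / t₁) • (z + t₁ • (z - y₁)) + (t * b / t₂) • (z + t₂ • (z - y₂)) := by
      have h1 : t * a / t₁ * t₁ = t * a := by field_simp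
      have h2 : t * b / t₂ * t₂ = t * b := by field_simp
      match_scalars
      · have := hlsum; nlinarith [hlsum, h1, h2]
      · nlinarith [h1]
      · nlinarith [h2]
    rw [key]
    exact hC hp₁ hp₂ hl₁ hl₂ hlsum
  -- G is a face
  have hGface : ∀ p ∈ C, ∀ q ∈ C, (openSegment ℝ p q ∩ G).Nonempty → p ∈ G ∧ q ∈ G := by
    rintro p hp q hq ⟨m, ⟨θ₁, θ₂, hθ₁, hθ₂, hsum, hm⟩, hmC, t, ht, hr⟩
    constructor
    · exact ⟨hp, face_step hC hq hθ₁ hθ₂.le hsum ht hm hr⟩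
    · refine ⟨hq, face_step hC hp hθ₂ hθ₁.le (by linarith) ht ?_ hr⟩
      rw [← hm]; abel
  have hGC : G ⊆ C := fun y hy => hy.1
  have hGisFace : IsFace C G := ⟨hGconv, hGC, hGface⟩
  -- z ∈ ri G
  have hzri : z ∈ intrinsicInterior ℝ G := by
    obtain ⟨g, hgri⟩ := Set.Nonempty.intrinsicInterior hGconv ⟨z, hzG⟩
    obtain ⟨hgC, t, ht, hw⟩ := intrinsicInterior_subset hgri
    set w : E := z + t • (z - g) with hwdef
    have hwG : w ∈ G := by
      refine ⟨hw, 1 / t, by positivity, ?_⟩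
      have : z + (1 / t) • (z - w) = g := by
        rw [hwdef]; match_scalars <;> field_simp <;> ring
      rw [this]; exact hgC
    have hzseg : z ∈ openSegment ℝ g w := by
      refine ⟨t / (1 + t), 1 / (1 + t), by positivity, by positivity, by field_simp; ring, ?_⟩
      rw [hwdef]; match_scalars <;> field_simp <;> ring
    exact mem_ii_of_openSegment hGconv hgri hwG hzseg
  -- each F α ⊆ G
  have hxG : ∀ α, x α ∈ G := by
    intro α
    obtain ⟨t, ht, hmem⟩ := extend_of_mem_ii (x α) hz (subset_convexHull ℝ _ ⟨α, rfl⟩)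
    exact ⟨hxC α, t, ht, hSC hmem⟩
  have hFG : ∀ α, F α ⊆ G := by
    intro α y hy
    obtain ⟨t, ht, hw⟩ := extend_of_mem_ii y (hx α) hy
    set w : E := x α + t • (x α - y) with hwdef
    have hseg : x α ∈ openSegment ℝ y w := by
      refine ⟨t / (1 + t), 1 / (1 + t), by positivity, by positivity, by field_simp; ring, ?_⟩
      rw [hwdef]; match_scalars <;> field_simp <;> ring
    exact (hGface y ((hF α).2.1 hy) w ((hF α).2.1 hw) ⟨x α, hseg, hxG α⟩).1
  -- minimality
  refine ⟨G, hGisFace, hzri, hFG, ?_⟩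
  rintro G' hG' hsub y ⟨hyC, t, ht, hw⟩
  have hzG' : z ∈ G' :=
    convexHull_min (by rintro _ ⟨α, rfl⟩; exact hsub α (intrinsicInterior_subset (hx α))) hG'.1 hzS
  have hseg : z ∈ openSegment ℝ y (z + t • (z - y)) := by
    refine ⟨t / (1 + t), 1 / (1 + t), by positivity, by positivity, by field_simp; ring, ?_⟩
    match_scalars <;> field_simp <;> ring
  exact (hG'.2.2 y hyC _ hw ⟨z, hseg, hzG'⟩).1
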